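/- Fix an integer N ≥ 2 and let i denote the imaginary unit. Let R be an associative unital ℂ-algebra containing elements p_1,…,p_N and invertible elements a_1,…,a_N such that all p_m commute with each other, all a_m and a_m^{-1} commute with each other, [p_m, a_k] = −i·δ_{mk}·a_k for all m,k, and elements with distinct indices commute. For u ∈ ℂ let L_m(u) be the 2×2 matrix over R with rows (u·1 − p_m, −a_m) and (a_m^{-1}, 0), and write T_N(u) = L_N(u)⋯L_1(u) = [[A_N(u), B_N(u)],[C_N(u), D_N(u)]]. Then A_N(u) is a polynomial in u of degree N with coefficients in R: A_N(u) = u^N + X_1·u^{N−1} + X_2·u^{N−2} + (lower order), where X_1 = −(p_1 + p_2 + ⋯ + p_N) and X_2 = ∑_{1≤m<k≤N} p_m·p_k − ∑_{k=1}^{N−1} a_{k+1}·a_k^{−1}. -/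
import Mathlib


noncomputable section

open Matrix Finset

/-- The monodromy matrix `T_N(u) = L_N(u)·L_{N−1}(u)⋯L_1(u)` built from the local
Lax matrices. -/
def monodromy {R : Type*} [Ring R] {N : ℕ}
    (L : Fin N → ℂ → Matrix (Fin 2) (Fin 2) R) (u : ℂ) : Matrix (Fin 2) (Fin 2) R :=
  ((List.ofFn fun m : Fin N => L m u).reverse).prod

section AuxToda

variable {R : Type*} [Ring R]

def todaX (p c : ℕ → R) : ℕ → ℕ → R
  | 0, 0 => 1
  | 0, _+1 => 0
  | 1, 0 => 1
  | 1, 1 => -p 0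
  | 1, _+2 => 0
  | (_+2), 0 => 1
  | (n+2), 1 => todaX p c (n+1) 1 - p (n+1)
  | (n+2), (k+2) => todaX p c (n+1) (k+2) - p (n+1) * todaX p c (n+1) (k+1)
      - c (n+1) * todaX p c n k

lemma todaX_zero (p c : ℕ → R) (n : ℕ) : todaX p c n 0 = 1 := by
  match n with
  | 0 => rfl
  | 1 => rfl
  | n+2 => rfl

lemma todaX_eq_zero (p c : ℕ → R) : ∀ n, ∀ k, n < k → todaX p c n k = 0 := by
  intro n
  induction n using Nat.strong_induction_on with
  | _ n ih =>
    intro k h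
    match n, k with
    | 0, k+1 => simp [todaX]
    | 1, k+2 => simp [todaX]
    | n+2, k+2 =>
      rw [todaX, ih (n+1) (by omega) (k+2) (by omega), ih (n+1) (by omega) (k+1) (by omega),
        ih n (by omega) k (by omega)]
      simp

lemma todaX_poly_rec [Algebra ℂ R] (p c : ℕ → R) (m : ℕ) (u : ℂ) :
    (∑ k ∈ Finset.range (m+3), algebraMap ℂ R (u^(m+2-k)) * todaX p c (m+2) k)
    = (algebraMap ℂ R u - p (m+1)) *
        (∑ k ∈ Finset.range (m+2), algebraMap ℂ R (u^(m+1-k)) * todaX p c (m+1) k)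
      - c (m+1) * (∑ k ∈ Finset.range (m+1), algebraMap ℂ R (u^(m-k)) * todaX p c m k) := by
  have h1 : (algebraMap ℂ R u) *
        (∑ k ∈ Finset.range (m+2), algebraMap ℂ R (u^(m+1-k)) * todaX p c (m+1) k)
      = ∑ k ∈ Finset.range (m+2), algebraMap ℂ R (u^(m+2-k)) * todaX p c (m+1) k := by
    rw [Finset.mul_sum]
    refine Finset.sum_congr rfl fun k hk => ?_
    rw [← mul_assoc, ← _root_.map_mul, ← pow_succ']
    have : m+1-k+1 = m+2-k := by have := Finset.mem_range.mp hk; omega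
    rw [this]
  have h2 : p (m+1) *
        (∑ k ∈ Finset.range (m+2), algebraMap ℂ R (u^(m+1-k)) * todaX p c (m+1) k)
      = ∑ k ∈ Finset.range (m+2), algebraMap ℂ R (u^(m+1-k)) * (p (m+1) * todaX p c (m+1) k) := by
    rw [Finset.mul_sum]
    refine Finset.sum_congr rfl fun k hk => ?_
    rw [← mul_assoc, ← Algebra.commutes, mul_assoc]
  have h3 : c (m+1) *
        (∑ k ∈ Finset.range (m+1), algebraMap ℂ R (u^(m-k)) * todaX p c m k)
      = ∑ k ∈ Finset.range (m+1), algebraMap ℂ R (u^(m-k)) * (c (m+1) * todaX p c m k) := by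
    rw [Finset.mul_sum]
    refine Finset.sum_congr rfl fun k hk => ?_
    rw [← mul_assoc, ← Algebra.commutes, mul_assoc]
  rw [sub_mul, h1, h2, h3]
  -- peel LHS twice
  rw [Finset.sum_range_succ' (fun k => algebraMap ℂ R (u^(m+2-k)) * todaX p c (m+2) k) (m+2),
    Finset.sum_range_succ' (fun i => algebraMap ℂ R (u^(m+2-(i+1))) * todaX p c (m+2) (i+1)) (m+1)]
  -- peel RHS first sum twice
  rw [Finset.sum_range_succ' (fun k => algebraMap ℂ R (u^(m+2-k)) * todaX p c (m+1) k) (m+1),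
    Finset.sum_range_succ' (fun i => algebraMap ℂ R (u^(m+2-(i+1))) * todaX p c (m+1) (i+1)) m]
  -- peel RHS second sum once
  rw [Finset.sum_range_succ'
    (fun k => algebraMap ℂ R (u^(m+1-k)) * (p (m+1) * todaX p c (m+1) k)) (m+1)]
  have e1 : ∀ k ∈ Finset.range (m+1),
      (algebraMap ℂ R) (u ^ (m + 2 - (k + 1 + 1))) * todaX p c (m + 2) (k + 1 + 1)
      = (algebraMap ℂ R) (u ^ (m - k)) * todaX p c (m+1) (k+2)
        - (algebraMap ℂ R) (u ^ (m - k)) * (p (m+1) * todaX p c (m+1) (k+1))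
        - (algebraMap ℂ R) (u ^ (m - k)) * (c (m+1) * todaX p c m k) := by
    intro k hk
    have h : m + 2 - (k+1+1) = m - k := by omega
    rw [h, show k+1+1 = k+2 from rfl, todaX, mul_sub, mul_sub]
  rw [Finset.sum_congr rfl e1, Finset.sum_sub_distrib, Finset.sum_sub_distrib]
  have e2 : ∀ k ∈ Finset.range m,
      (algebraMap ℂ R) (u ^ (m + 2 - (k + 1 + 1))) * todaX p c (m + 1) (k + 1 + 1)
      = (algebraMap ℂ R) (u ^ (m - k)) * todaX p c (m+1) (k+2) := by
    intro k hk
    have h : m + 2 - (k+1+1) = m - k := by omega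
    rw [h, show k+1+1 = k+2 from rfl]
  rw [Finset.sum_congr rfl e2]
  have e3 : ∀ k ∈ Finset.range (m+1),
      (algebraMap ℂ R) (u ^ (m + 1 - (k + 1))) * (p (m + 1) * todaX p c (m + 1) (k + 1))
      = (algebraMap ℂ R) (u ^ (m - k)) * (p (m + 1) * todaX p c (m + 1) (k + 1)) := by
    intro k hk
    have h : m + 1 - (k+1) = m - k := by omega
    rw [h]
  rw [Finset.sum_congr rfl e3]
  have e4 : (∑ k ∈ Finset.range (m+1), (algebraMap ℂ R) (u ^ (m - k)) * todaX p c (m+1) (k+2))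
      = ∑ k ∈ Finset.range m, (algebraMap ℂ R) (u ^ (m - k)) * todaX p c (m+1) (k+2) := by
    rw [Finset.sum_range_succ]
    simp [todaX_eq_zero p c (m+1) (m+2) (by omega)]
  rw [e4]
  simp only [show (0:ℕ)+1=1 from rfl, Nat.sub_zero, show m+2-1 = m+1 from rfl,
    show m+1-0 = m+1 from rfl, show m+2-0 = m+2 from rfl, todaX_zero, mul_one,
    show todaX p c (m+2) 1 = todaX p c (m+1) 1 - p (m+1) from rfl, mul_sub]
  abel

lemma todaX_one (p c : ℕ → R) (n : ℕ) :
    todaX p c n 1 = -∑ m ∈ Finset.range n, p m := by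
  induction n with
  | zero => simp [todaX]
  | succ n ih =>
    match n with
    | 0 => simp [todaX]
    | n+1 =>
      rw [show n+1+1 = n+2 from rfl, todaX, ih, Finset.sum_range_succ p (n+1)]
      abel

lemma todaX_two (p c : ℕ → R) (n : ℕ) :
    todaX p c n 2 = (∑ k ∈ Finset.range n, p k * ∑ m ∈ Finset.range k, p m)
      - ∑ j ∈ Finset.range (n-1), c (j+1) := by
  induction n with
  | zero => simp [todaX]
  | succ n ih =>
    match n with
    | 0 => simp [todaX]
    | n+1 =>
      rw [show n+1+1 = n+2 from rfl, todaX, ih, todaX_one, todaX_zero,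
        Finset.sum_range_succ (fun k => p k * ∑ m ∈ Finset.range k, p m) (n+1),
        show (n+2-1) = n+1 from rfl, Finset.sum_range_succ (fun j => c (j+1)) n,
        show (n+1-1) = n from rfl]
      simp only [mul_neg, mul_one, sub_neg_eq_add]
      abel

end AuxToda

/-- The entry `A_N(u)` of the Toda monodromy matrix is a monic polynomial in `u` of
degree `N`, `A_N(u) = u^N + X₁·u^{N−1} + X₂·u^{N−2} + (lower order)`, with
`X₁ = −(p₁ + ⋯ + p_N)` and `X₂ = ∑_{m<k} p_m p_k − ∑_{k=1}^{N−1} a_{k+1}·a_k⁻¹`. -/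
theorem toda_A_entry_polynomial
    (N : ℕ) (hN : 2 ≤ N)
    (R : Type*) [Ring R] [Algebra ℂ R] (p : Fin N → R) (a : Fin N → Rˣ)
    (hpp : ∀ m k, p m * p k = p k * p m)
    (haa : ∀ m k, (a m : R) * (a k : R) = (a k : R) * (a m : R))
    (haainv : ∀ m k, (a m : R) * (((a k)⁻¹ : Rˣ) : R) = (((a k)⁻¹ : Rˣ) : R) * (a m : R))
    (hainvinv : ∀ m k, (((a m)⁻¹ : Rˣ) : R) * (((a k)⁻¹ : Rˣ) : R)
        = (((a k)⁻¹ : Rˣ) : R) * (((a m)⁻¹ : Rˣ) : R))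
    (hpa : ∀ m k, p m * (a k : R) - (a k : R) * p m
        = if m = k then -(algebraMap ℂ R Complex.I) * (a k : R) else 0)
    (hpainv : ∀ m k, m ≠ k → p m * (((a k)⁻¹ : Rˣ) : R) = (((a k)⁻¹ : Rˣ) : R) * p m)
    (L : Fin N → ℂ → Matrix (Fin 2) (Fin 2) R)
    (hL : ∀ m (u : ℂ),
      L m u = !![algebraMap ℂ R u - p m, -(a m : R); (((a m)⁻¹ : Rˣ) : R), 0]) :
    ∃ X : ℕ → R,
      X 0 = 1 ∧
      X 1 = -(∑ m : Fin N, p m) ∧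
      X 2 = (∑ q ∈ Finset.univ.filter (fun q : Fin N × Fin N => q.1 < q.2), p q.1 * p q.2)
          - ∑ k : Fin (N - 1),
              ((a (Fin.cast (by omega) k.succ) : R) *
                (((a (Fin.castLE (by omega) k.castSucc))⁻¹ : Rˣ) : R)) ∧
      ∀ u : ℂ, monodromy L u 0 0
          = ∑ k ∈ Finset.range (N + 1), algebraMap ℂ R (u ^ (N - k)) * X k := by
  classical
  set p' : ℕ → R := fun n => if h : n < N then p ⟨n, h⟩ else 0 with hp'def
  set a' : ℕ → R := fun n => if h : n < N then (a ⟨n, h⟩ : R) else 0 with ha'def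
  set i' : ℕ → R := fun n => if h : n < N then (((a ⟨n, h⟩)⁻¹ : Rˣ) : R) else 0 with hi'def
  set c : ℕ → R := fun n => a' n * i' (n-1) with hcdef
  have hp'eq : ∀ (n : ℕ) (h : n < N), p' n = p ⟨n, h⟩ := fun n h => dif_pos h
  have ha'eq : ∀ (n : ℕ) (h : n < N), a' n = (a ⟨n, h⟩ : R) := fun n h => dif_pos h
  have hi'eq : ∀ (n : ℕ) (h : n < N), i' n = (((a ⟨n, h⟩)⁻¹ : Rˣ) : R) := fun n h => dif_pos h
  have key : ∀ n (hn : n ≤ N) (u : ℂ),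
      (((List.ofFn fun m : Fin n => L (Fin.castLE hn m) u).reverse).prod 0 0
         = ∑ k ∈ Finset.range (n+1), algebraMap ℂ R (u ^ (n-k)) * todaX p' c n k)
      ∧ (((List.ofFn fun m : Fin n => L (Fin.castLE hn m) u).reverse).prod 1 0
         = i' (n-1) * ∑ k ∈ Finset.range n, algebraMap ℂ R (u ^ (n-1-k)) * todaX p' c (n-1) k) := by
    intro n
    induction n with
    | zero =>
      intro hn u
      constructor
      · simp [todaX, Matrix.one_apply]
      · simp [Matrix.one_apply]
    | succ n ih =>
      intro hn u
      have hn' : n ≤ N := le_trans (Nat.le_succ n) hn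
      have hnN : n < N := hn
      obtain ⟨ihA, ihC⟩ := ih hn' u
      have hsplit : ((List.ofFn fun m : Fin (n+1) => L (Fin.castLE hn m) u).reverse).prod
          = L ⟨n, hnN⟩ u * ((List.ofFn fun m : Fin n => L (Fin.castLE hn' m) u).reverse).prod := by
        rw [List.ofFn_succ', List.concat_eq_append, List.reverse_append]
        simp only [List.reverse_singleton, List.singleton_append, List.prod_cons]
        rfl
      have hLA : L ⟨n, hnN⟩ u 0 0 = algebraMap ℂ R u - p' n := by
        rw [hL, hp'eq n hnN]; rfl
      have hLB : L ⟨n, hnN⟩ u 0 1 = -(a' n) := by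
        rw [hL, ha'eq n hnN]; rfl
      have hLC : L ⟨n, hnN⟩ u 1 0 = i' n := by
        rw [hL, hi'eq n hnN]; rfl
      constructor
      · rw [hsplit, Matrix.mul_apply, Fin.sum_univ_two, hLA, hLB, ihA, ihC]
        match n with
        | 0 =>
          simp [todaX, Finset.sum_range_succ, sub_mul, sub_eq_add_neg]
        | m+1 =>
          have : -(a' (m+1)) * (i' (m+1-1) *
              ∑ k ∈ Finset.range (m+1), algebraMap ℂ R (u ^ (m+1-1-k)) * todaX p' c (m+1-1) k)
              = -(c (m+1) * ∑ k ∈ Finset.range (m+1), algebraMap ℂ R (u ^ (m-k)) * todaX p' c m k) := by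
            rw [neg_mul, ← mul_assoc]
            rfl
          rw [this, todaX_poly_rec p' c m u]
          exact (sub_eq_add_neg _ _).symm
      · rw [hsplit, Matrix.mul_apply, Fin.sum_univ_two, hLC, ihA]
        have : L ⟨n, hnN⟩ u 1 1 = 0 := by rw [hL]; rfl
        rw [this, zero_mul, add_zero]
        rfl
  refine ⟨todaX p' c N, todaX_zero p' c N, ?_, ?_, ?_⟩
  · rw [todaX_one]
    congr 1
    rw [← Fin.sum_univ_eq_sum_range (fun i => p' i) N]
    exact Finset.sum_congr rfl fun m _ => by rw [hp'eq m.val m.isLt]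
  · rw [todaX_two]
    congr 1
    · -- quadratic part
      rw [Finset.sum_filter, Fintype.sum_prod_type, Finset.sum_comm]
      rw [← Fin.sum_univ_eq_sum_range (fun k => p' k * ∑ m ∈ Finset.range k, p' m) N]
      refine Finset.sum_congr rfl fun b _ => ?_
      have hfil : (Finset.range N).filter (fun m => m < b.val) = Finset.range b.val := by
        ext x
        simp only [Finset.mem_filter, Finset.mem_range]
        constructor
        · rintro ⟨_, h⟩; exact h
        · intro h; exact ⟨lt_trans h b.isLt, h⟩
      have hx : ∀ x : Fin N, (if (x, b).1 < (x, b).2 then p (x, b).1 * p (x, b).2 else 0)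
          = (fun m => if m < b.val then p' m * p' b.val else 0) x.val := by
        intro x
        simp only [Fin.lt_def, hp'eq x.val x.isLt, hp'eq b.val b.isLt, Fin.eta]
      rw [Finset.sum_congr rfl fun x _ => hx x,
        Fin.sum_univ_eq_sum_range (fun m => if m < b.val then p' m * p' b.val else 0) N,
        ← Finset.sum_filter, hfil, Finset.mul_sum]
      refine Finset.sum_congr rfl fun m hm => ?_
      have hmN : m < N := lt_trans (Finset.mem_range.mp hm) b.isLt
      rw [hp'eq m hmN, hp'eq b.val b.isLt]
      exact hpp _ _
    · -- the a-sum
      rw [← Fin.sum_univ_eq_sum_range (fun j => c (j+1)) (N-1)]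
      refine Finset.sum_congr rfl fun k _ => ?_
      have hk1 : k.val + 1 < N := by omega
      have hk0 : k.val < N := by omega
      show a' (k.val+1) * i' (k.val+1-1) = _
      rw [show k.val+1-1 = k.val from rfl, ha'eq _ hk1, hi'eq _ hk0]
      congr 1
  · intro u
    have := (key N (le_refl N) u).1
    have hiden : monodromy L u
        = ((List.ofFn fun m : Fin N => L (Fin.castLE (le_refl N) m) u).reverse).prod := rfl
    rw [hiden, this]
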